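/- Let L > 0, ρ > 0, and let λ : [0,L] → ℝ be continuous with λ(s) ≥ λ₀ for all s, for some λ₀ > 0. Then for every f ∈ L²((0,L);ℝ) and every x ∈ [0,L], | ∫₀ˣ e^{−(1/ρ)∫ₛˣ λ(v)⁻¹ dv} λ(s)⁻¹ f(s) ds | ≤ √( ρ · (sup_{s∈[0,L]} λ(s)⁻¹) / 2 ) · ‖f‖_{L²(0,L)}. In particular the left-hand side tends to 0 uniformly in x and in f of bounded L² norm as ρ → 0. -/

import Mathlib

open MeasureTheory Set

/-- Cauchy–Schwarz for real integrals. -/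
lemma cs_integral {μ : Measure ℝ} (g f : ℝ → ℝ)
    (hg : AEStronglyMeasurable g μ) (hf : AEStronglyMeasurable f μ)
    (hg2 : Integrable (fun s => g s ^ 2) μ) (hf2 : Integrable (fun s => f s ^ 2) μ) :
    |∫ s, g s * f s ∂μ| ≤ Real.sqrt (∫ s, g s ^ 2 ∂μ) * Real.sqrt (∫ s, f s ^ 2 ∂μ) := by
  set A := ∫ s, g s ^ 2 ∂μ with hA
  set B := ∫ s, f s ^ 2 ∂μ with hB
  have hA0 : 0 ≤ A := integral_nonneg fun s => sq_nonneg _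
  have hB0 : 0 ≤ B := integral_nonneg fun s => sq_nonneg _
  have hgf : Integrable (fun s => g s * f s) μ := by
    refine Integrable.mono ((hg2.add hf2).div_const 2) (hg.mul hf) ?_
    filter_upwards with s
    simp only [Real.norm_eq_abs, abs_mul, Pi.add_apply, Pi.div_apply]
    have h1 := sq_nonneg (|g s| - |f s|)
    have h2 : (0:ℝ) ≤ g s ^ 2 + f s ^ 2 := by positivity
    rw [abs_of_nonneg (by positivity : (0:ℝ) ≤ (g s ^ 2 + f s ^ 2) / 2)]
    nlinarith [sq_abs (g s), sq_abs (f s)]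
  rcases eq_or_lt_of_le hA0 with hA' | hApos
  · -- A = 0 : g = 0 a.e.
    have hg0 : (fun s => g s ^ 2) =ᵐ[μ] 0 := by
      rw [← integral_eq_zero_iff_of_nonneg_ae (Filter.Eventually.of_forall fun s => sq_nonneg _) hg2]
      exact hA'.symm
    have : (fun s => g s * f s) =ᵐ[μ] 0 := by
      filter_upwards [hg0] with s hs
      have : g s = 0 := by
        have := hs; simp only [Pi.zero_apply] at this; exact pow_eq_zero_iff (n := 2) (by norm_num) |>.mp this
      simp [this]
    rw [integral_congr_ae this]
    simp [Real.sqrt_nonneg, mul_nonneg]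
  rcases eq_or_lt_of_le hB0 with hB' | hBpos
  · have hf0 : (fun s => f s ^ 2) =ᵐ[μ] 0 := by
      rw [← integral_eq_zero_iff_of_nonneg_ae (Filter.Eventually.of_forall fun s => sq_nonneg _) hf2]
      exact hB'.symm
    have : (fun s => g s * f s) =ᵐ[μ] 0 := by
      filter_upwards [hf0] with s hs
      have : f s = 0 := by
        have := hs; simp only [Pi.zero_apply] at this; exact pow_eq_zero_iff (n := 2) (by norm_num) |>.mp this
      simp [this]
    rw [integral_congr_ae this]
    simp [Real.sqrt_nonneg, mul_nonneg]
  -- main case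
  set a := Real.sqrt A with ha
  set b := Real.sqrt B with hb
  have hapos : 0 < a := Real.sqrt_pos.mpr hApos
  have hbpos : 0 < b := Real.sqrt_pos.mpr hBpos
  set ε := b / a with hε
  have hεpos : 0 < ε := div_pos hbpos hapos
  have key : ∀ s, |g s * f s| ≤ (ε * g s ^ 2 + ε⁻¹ * f s ^ 2) / 2 := by
    intro s
    have h2 : 2 * (|g s| * |f s|) * ε ≤ ε ^ 2 * g s ^ 2 + f s ^ 2 := by
      nlinarith [sq_nonneg (ε * |g s| - |f s|), sq_abs (g s), sq_abs (f s)]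
    rw [abs_mul]
    have heq : (ε * g s ^ 2 + ε⁻¹ * f s ^ 2) / 2 = (ε ^ 2 * g s ^ 2 + f s ^ 2) / (2 * ε) := by
      field_simp
    rw [heq, le_div_iff₀ (by positivity)]
    calc |g s| * |f s| * (2 * ε) = 2 * (|g s| * |f s|) * ε := by ring
      _ ≤ ε ^ 2 * g s ^ 2 + f s ^ 2 := h2
  have hint : |∫ s, g s * f s ∂μ| ≤ ∫ s, (ε * g s ^ 2 + ε⁻¹ * f s ^ 2) / 2 ∂μ := by
    calc |∫ s, g s * f s ∂μ| ≤ ∫ s, |g s * f s| ∂μ := by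
          simpa only [Real.norm_eq_abs] using
            norm_integral_le_integral_norm (μ := μ) (fun s => g s * f s)
      _ ≤ ∫ s, (ε * g s ^ 2 + ε⁻¹ * f s ^ 2) / 2 ∂μ := by
          refine integral_mono hgf.abs (((hg2.const_mul ε).add (hf2.const_mul ε⁻¹)).div_const 2) ?_
          intro s; exact key s
  have hcalc : ∫ s, (ε * g s ^ 2 + ε⁻¹ * f s ^ 2) / 2 ∂μ = (ε * A + ε⁻¹ * B) / 2 := by
    rw [integral_div, integral_add (hg2.const_mul ε) (hf2.const_mul ε⁻¹),
      integral_const_mul, integral_const_mul]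
  have haA : a * a = A := Real.mul_self_sqrt hA0
  have hbB : b * b = B := Real.mul_self_sqrt hB0
  have : (ε * A + ε⁻¹ * B) / 2 = a * b := by
    rw [← haA, ← hbB, hε]
    field_simp
    ring
  rw [hcalc, this] at hint
  exact hint

theorem stmt_8 (L ρ : ℝ) (hL : 0 < L) (hρ : 0 < ρ)
    (lam : ℝ → ℝ) (hlamcont : ContinuousOn lam (Icc 0 L))
    (lam₀ : ℝ) (hlam₀ : 0 < lam₀) (hge : ∀ s ∈ Icc (0:ℝ) L, lam₀ ≤ lam s)
    (f : ℝ → ℝ) (hfmeas : Measurable f)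
    (hf2 : IntegrableOn (fun s => f s ^ 2) (Ioo 0 L))
    (x : ℝ) (hx : x ∈ Icc (0:ℝ) L) :
    |∫ s in Ioo 0 x,
        Real.exp (-(1 / ρ) * ∫ v in Ioo s x, (lam v)⁻¹) * (lam s)⁻¹ * f s|
      ≤ Real.sqrt (ρ * (⨆ s : Icc (0:ℝ) L, (lam (s : ℝ))⁻¹) / 2)
        * Real.sqrt (∫ s in Ioo 0 L, f s ^ 2) := by
  obtain ⟨hx0, hxL⟩ := hx
  -- positivity of lam on Icc
  have hlampos : ∀ s ∈ Icc (0:ℝ) L, 0 < lam s := fun s hs => lt_of_lt_of_le hlam₀ (hge s hs)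
  have hlamne : ∀ s ∈ Icc (0:ℝ) L, lam s ≠ 0 := fun s hs => (hlampos s hs).ne'
  have hinvcont : ContinuousOn (fun v => (lam v)⁻¹) (Icc 0 L) := hlamcont.inv₀ hlamne
  have hIccsub : Icc (0:ℝ) x ⊆ Icc 0 L := Icc_subset_Icc le_rfl hxL
  -- sup bound
  set M := ⨆ s : Icc (0:ℝ) L, (lam (s : ℝ))⁻¹ with hM
  have hbdd : BddAbove (range fun s : Icc (0:ℝ) L => (lam (s : ℝ))⁻¹) := by
    have : IsCompact ((fun v => (lam v)⁻¹) '' Icc (0:ℝ) L) :=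
      (isCompact_Icc).image_of_continuousOn hinvcont
    have hr : (range fun s : Icc (0:ℝ) L => (lam (s : ℝ))⁻¹) = (fun v => (lam v)⁻¹) '' Icc 0 L := by
      ext y; constructor
      · rintro ⟨⟨s, hs⟩, rfl⟩; exact ⟨s, hs, rfl⟩
      · rintro ⟨s, hs, rfl⟩; exact ⟨⟨s, hs⟩, rfl⟩
    rw [hr]
    exact this.bddAbove
  have hleM : ∀ s ∈ Icc (0:ℝ) L, (lam s)⁻¹ ≤ M := by
    intro s hs
    exact le_ciSup hbdd ⟨s, hs⟩
  have hMpos : 0 < M :=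
    lt_of_lt_of_le (inv_pos.mpr (hlampos 0 ⟨le_rfl, hL.le⟩)) (hleM 0 ⟨le_rfl, hL.le⟩)
  -- interval integrability of lam⁻¹ on subintervals of [0, L]
  have hII : ∀ a b : ℝ, a ∈ Icc (0:ℝ) L → b ∈ Icc (0:ℝ) L → a ≤ b →
      IntervalIntegrable (fun v => (lam v)⁻¹) volume a b := by
    intro a b ha hb hab
    apply ContinuousOn.intervalIntegrable
    apply hinvcont.mono
    rw [uIcc_of_le hab]
    exact Icc_subset_Icc ha.1 hb.2
  -- primitive
  set P := fun t => ∫ v in (0:ℝ)..t, (lam v)⁻¹ with hP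
  have hPcont : ContinuousOn P (Icc 0 x) := by
    have := intervalIntegral.continuousOn_primitive_interval
      (a := (0:ℝ)) (b := x) (μ := volume) (f := fun v => (lam v)⁻¹) ?_
    · rwa [uIcc_of_le hx0] at this
    · rw [uIcc_of_le hx0]
      exact (hinvcont.mono hIccsub).integrableOn_compact isCompact_Icc
  -- rewrite inner integral
  have hinner : ∀ s ∈ Ioo (0:ℝ) x, (∫ v in Ioo s x, (lam v)⁻¹) = P x - P s := by
    intro s hs
    have hs' : s ∈ Icc (0:ℝ) L := ⟨hs.1.le, hs.2.le.trans hxL⟩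
    have h1 : IntervalIntegrable (fun v => (lam v)⁻¹) volume 0 s :=
      hII 0 s ⟨le_rfl, hL.le⟩ hs' hs.1.le
    have h2 : IntervalIntegrable (fun v => (lam v)⁻¹) volume s x :=
      hII s x hs' ⟨hx0, hxL⟩ hs.2.le
    have hadd := intervalIntegral.integral_add_adjacent_intervals h1 h2
    have : (∫ v in Ioo s x, (lam v)⁻¹) = ∫ v in s..x, (lam v)⁻¹ := by
      rw [intervalIntegral.integral_of_le hs.2.le, integral_Ioc_eq_integral_Ioo]
    rw [this, hP]
    simp only
    linarith [hadd]
  -- define G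
  set G := fun s => Real.exp (-(1 / ρ) * (P x - P s)) * (lam s)⁻¹ with hG
  have hGcont : ContinuousOn G (Icc 0 x) := by
    apply ContinuousOn.mul
    · exact (continuousOn_const.mul (continuousOn_const.sub hPcont)).rexp
    · exact hinvcont.mono hIccsub
  have hcongr : (∫ s in Ioo 0 x,
      Real.exp (-(1 / ρ) * ∫ v in Ioo s x, (lam v)⁻¹) * (lam s)⁻¹ * f s)
      = ∫ s in Ioo 0 x, G s * f s := by
    apply setIntegral_congr_fun measurableSet_Ioo
    intro s hs
    dsimp only
    rw [hinner s hs]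
  rw [hcongr]
  -- Cauchy–Schwarz
  have hGmeas : AEStronglyMeasurable G (volume.restrict (Ioo 0 x)) :=
    (hGcont.mono Ioo_subset_Icc_self).aestronglyMeasurable measurableSet_Ioo
  have hfmeas' : AEStronglyMeasurable f (volume.restrict (Ioo 0 x)) :=
    (hfmeas.aestronglyMeasurable).restrict
  have hG2int : Integrable (fun s => G s ^ 2) (volume.restrict (Ioo 0 x)) := by
    have : ContinuousOn (fun s => G s ^ 2) (Icc 0 x) := hGcont.pow 2
    exact (this.integrableOn_compact isCompact_Icc).mono_set Ioo_subset_Icc_self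
  have hf2x : Integrable (fun s => f s ^ 2) (volume.restrict (Ioo 0 x)) :=
    hf2.mono_set (Ioo_subset_Ioo le_rfl hxL)
  have hCS := cs_integral (μ := volume.restrict (Ioo 0 x)) G f hGmeas hfmeas' hG2int hf2x
  refine hCS.trans ?_
  -- bound ∫ G² by ρ M / 2
  have hf2mono : (∫ s in Ioo 0 x, f s ^ 2) ≤ ∫ s in Ioo 0 L, f s ^ 2 := by
    apply setIntegral_mono_set hf2
    · filter_upwards with s using sq_nonneg _
    · exact HasSubset.Subset.eventuallyLE (Ioo_subset_Ioo le_rfl hxL)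
  have hG2bound : (∫ s in Ioo 0 x, G s ^ 2) ≤ ρ * M / 2 := by
    set h := fun s => Real.exp (-(2 / ρ) * (P x - P s)) * (lam s)⁻¹ with hh
    have hhcont : ContinuousOn h (Icc 0 x) := by
      apply ContinuousOn.mul
      · exact (continuousOn_const.mul (continuousOn_const.sub hPcont)).rexp
      · exact hinvcont.mono hIccsub
    have hpt : ∀ s ∈ Icc (0:ℝ) x, G s ^ 2 ≤ M * h s := by
      intro s hs
      have hs' : s ∈ Icc (0:ℝ) L := hIccsub hs
      have hinv0 : 0 ≤ (lam s)⁻¹ := (inv_pos.mpr (hlampos s hs')).le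
      have hexp : Real.exp (-(1 / ρ) * (P x - P s)) ^ 2 = Real.exp (-(2 / ρ) * (P x - P s)) := by
        rw [← Real.exp_nat_mul]
        congr 1
        ring
      rw [hG, hh]
      simp only
      rw [mul_pow, hexp]
      have hM' := hleM s hs'
      calc Real.exp (-(2 / ρ) * (P x - P s)) * (lam s)⁻¹ ^ 2
          = Real.exp (-(2 / ρ) * (P x - P s)) * (lam s)⁻¹ * (lam s)⁻¹ := by ring
        _ ≤ Real.exp (-(2 / ρ) * (P x - P s)) * (lam s)⁻¹ * M := by
            apply mul_le_mul_of_nonneg_left hM'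
            positivity
        _ = M * (Real.exp (-(2 / ρ) * (P x - P s)) * (lam s)⁻¹) := by ring
    -- FTC computation of ∫ h
    set φ := fun s => ρ / 2 * Real.exp (-(2 / ρ) * (P x - P s)) with hφ
    have hφcont : ContinuousOn φ (Icc 0 x) :=
      continuousOn_const.mul ((continuousOn_const.mul (continuousOn_const.sub hPcont)).rexp)
    have hφderiv : ∀ s ∈ Ioo (0:ℝ) x, HasDerivWithinAt φ (h s) (Ioi s) s := by
      intro s hs
      have hs' : s ∈ Icc (0:ℝ) L := ⟨hs.1.le, hs.2.le.trans hxL⟩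
      have hsIcc : Icc (0:ℝ) L ∈ nhds s := by
        apply Icc_mem_nhds
        · exact hs.1
        · exact lt_of_lt_of_le hs.2 hxL
      have hPderiv : HasDerivAt P ((lam s)⁻¹) s := by
        apply intervalIntegral.integral_hasDerivAt_right
        · exact hII 0 s ⟨le_rfl, hL.le⟩ hs' hs.1.le
        · exact ⟨Icc 0 L, hsIcc, hinvcont.aestronglyMeasurable measurableSet_Icc⟩
        · exact hinvcont.continuousAt hsIcc
      have : HasDerivAt φ (ρ / 2 * (Real.exp (-(2 / ρ) * (P x - P s)) * (-(2 / ρ) * (0 - (lam s)⁻¹)))) s := by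
        apply HasDerivAt.const_mul
        apply HasDerivAt.exp
        exact (hasDerivAt_const s (P x) |>.sub hPderiv).const_mul (-(2 / ρ))
      have heq : ρ / 2 * (Real.exp (-(2 / ρ) * (P x - P s)) * (-(2 / ρ) * (0 - (lam s)⁻¹))) = h s := by
        rw [hh]
        simp only
        field_simp [hρ.ne', hlamne s hs']
        ring
      rw [heq] at this
      exact this.hasDerivWithinAt
    have hhII : IntervalIntegrable h volume 0 x := by
      apply ContinuousOn.intervalIntegrable
      rwa [uIcc_of_le hx0]
    have hFTC := intervalIntegral.integral_eq_sub_of_hasDeriv_right_of_le hx0 hφcont hφderiv hhII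
    have hIoo : (∫ s in Ioo 0 x, h s) = φ x - φ 0 := by
      rw [← hFTC, intervalIntegral.integral_of_le hx0, integral_Ioc_eq_integral_Ioo]
    have hφx : φ x = ρ / 2 := by
      rw [hφ]; simp
    have hφ0 : 0 < φ 0 := by
      rw [hφ]
      positivity
    have hhle : (∫ s in Ioo 0 x, h s) ≤ ρ / 2 := by
      rw [hIoo, hφx]; linarith
    calc (∫ s in Ioo 0 x, G s ^ 2) ≤ ∫ s in Ioo 0 x, M * h s := by
          apply setIntegral_mono_on hG2int ?_ measurableSet_Ioo
          · intro s hs; exact hpt s (Ioo_subset_Icc_self hs)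
          · exact (((hhcont.const_smul M).integrableOn_compact isCompact_Icc).mono_set
              Ioo_subset_Icc_self)
      _ = M * ∫ s in Ioo 0 x, h s := by rw [integral_const_mul]
      _ ≤ M * (ρ / 2) := by
          apply mul_le_mul_of_nonneg_left hhle hMpos.le
      _ = ρ * M / 2 := by ring
  -- conclude
  apply mul_le_mul
  · exact Real.sqrt_le_sqrt hG2bound
  · exact Real.sqrt_le_sqrt hf2mono
  · exact Real.sqrt_nonneg _
  · exact Real.sqrt_nonneg _
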